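/- arXiv:1702.06305 — 3 statements merged into one kernel-verified Lean document; each statement's English description precedes it below -/
import Mathlib

section
/- Let X = [[A, C],[Cᵀ, B]] be a real symmetric (n+m)×(n+m) block matrix with A an n×n symmetric block. Then rank(X) = rank(A) if and only if there exists an n×m real matrix Λ such that C = AΛ and B = Λᵀ A Λ. -/
open Matrix

section Aux

variable {k n m : Type*} [Fintype k] [Fintype n] [Fintype m] [DecidableEq n] [DecidableEq m]

lemma range_fromColumns_eq (P : Matrix k n ℝ) (Q : Matrix k m ℝ) :
    LinearMap.range (fromCols P Q).mulVecLin =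
      LinearMap.range P.mulVecLin ⊔ LinearMap.range Q.mulVecLin := by
  apply le_antisymm
  · rintro v ⟨w, rfl⟩
    have hw : w = Sum.elim (w ∘ Sum.inl) (w ∘ Sum.inr) := by
      ext (i | i) <;> rfl
    rw [mulVecLin_apply, hw, fromCols_mulVec_sumElim]
    exact Submodule.add_mem_sup ⟨w ∘ Sum.inl, rfl⟩ ⟨w ∘ Sum.inr, rfl⟩
  · rw [sup_le_iff]
    constructor
    · rintro v ⟨x, rfl⟩
      exact ⟨Sum.elim x 0, by simp [fromCols_mulVec_sumElim]⟩
    · rintro v ⟨y, rfl⟩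
      exact ⟨Sum.elim 0 y, by simp [fromCols_mulVec_sumElim]⟩

lemma rank_left_le_fromColumns (P : Matrix k n ℝ) (Q : Matrix k m ℝ) :
    P.rank ≤ (fromCols P Q).rank := by
  rw [Matrix.rank, Matrix.rank, range_fromColumns_eq]
  exact Submodule.finrank_mono le_sup_left

lemma exists_factor_of_rank_fromColumns_le (P : Matrix k n ℝ) (Q : Matrix k m ℝ)
    (h : (fromCols P Q).rank ≤ P.rank) : ∃ M : Matrix n m ℝ, Q = P * M := by
  have hle : LinearMap.range Q.mulVecLin ≤ LinearMap.range P.mulVecLin := by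
    have h1 : LinearMap.range P.mulVecLin ≤ LinearMap.range (fromCols P Q).mulVecLin := by
      rw [range_fromColumns_eq]; exact le_sup_left
    have heq : LinearMap.range P.mulVecLin = LinearMap.range (fromCols P Q).mulVecLin :=
      Submodule.eq_of_le_of_finrank_le h1 h
    rw [heq, range_fromColumns_eq]
    exact le_sup_right
  have hcol : ∀ j, ∃ x : n → ℝ, P *ᵥ x = Q *ᵥ Pi.single j 1 := fun j =>
    hle ⟨Pi.single j 1, rfl⟩
  choose f hf using hcol
  refine ⟨Matrix.of fun i j => f j i, ?_⟩
  ext i j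
  have := congrFun (hf j) i
  simp only [mulVec, dotProduct] at this
  simp only [Matrix.mul_apply, Matrix.of_apply]
  rw [this]
  simp [Pi.single_apply]

lemma rank_top_le_fromRows (P : Matrix n k ℝ) (Q : Matrix m k ℝ) :
    P.rank ≤ (fromRows P Q).rank := by
  have hcomp : P.mulVecLin =
      (LinearMap.funLeft ℝ ℝ Sum.inl).comp (fromRows P Q).mulVecLin := by
    ext x i
    simp [fromRows_mulVec]
  rw [Matrix.rank, Matrix.rank, hcomp, LinearMap.range_comp]
  exact Submodule.finrank_map_le _ _

end Aux

theorem rank_block_eq_iff (n m : ℕ)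
    (A : Matrix (Fin n) (Fin n) ℝ) (B : Matrix (Fin m) (Fin m) ℝ)
    (C : Matrix (Fin n) (Fin m) ℝ) (hA : A.IsSymm) (hB : B.IsSymm) :
    (Matrix.fromBlocks A C Cᵀ B).rank = A.rank ↔
      ∃ L : Matrix (Fin n) (Fin m) ℝ, C = A * L ∧ B = Lᵀ * A * L := by
  have hX : fromBlocks A C Cᵀ B = fromCols (fromRows A Cᵀ) (fromRows C B) :=
    (fromCols_fromRows_eq_fromBlocks A C Cᵀ B).symm
  have hrankA_le : A.rank ≤ (fromBlocks A C Cᵀ B).rank := by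
    rw [hX]
    exact le_trans (rank_top_le_fromRows A Cᵀ)
      (rank_left_le_fromColumns (fromRows A Cᵀ) (fromRows C B))
  constructor
  · intro h
    have hle : (fromCols (fromRows A Cᵀ) (fromRows C B)).rank ≤ (fromRows A Cᵀ).rank := by
      rw [← hX, h]
      exact rank_top_le_fromRows A Cᵀ
    obtain ⟨M, hM⟩ := exists_factor_of_rank_fromColumns_le _ _ hle
    rw [fromRows_mul] at hM
    have hC : C = A * M := by
      ext i j
      simpa using congrFun (congrFun hM (Sum.inl i)) j
    have hB' : B = Cᵀ * M := by
      ext i j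
      simpa using congrFun (congrFun hM (Sum.inr i)) j
    refine ⟨M, hC, ?_⟩
    rw [hB', hC, Matrix.transpose_mul, hA.eq, Matrix.mul_assoc]
  · rintro ⟨L, hC, hB'⟩
    refine le_antisymm ?_ hrankA_le
    have hmain : fromBlocks A C Cᵀ B = (fromCols 1 L)ᵀ * A * fromCols 1 L := by
      rw [transpose_fromCols, transpose_one, Matrix.mul_assoc, mul_fromCols,
        fromRows_mul_fromCols, Matrix.mul_one, Matrix.one_mul, Matrix.one_mul]
      have hCt : Cᵀ = Lᵀ * A := by rw [hC, Matrix.transpose_mul, hA.eq]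
      rw [hC, hB']
      rw [show (A * L)ᵀ = Lᵀ * A from by rw [Matrix.transpose_mul, hA.eq], Matrix.mul_assoc]
    rw [hmain]
    calc ((fromCols 1 L)ᵀ * A * fromCols 1 L).rank
        ≤ ((fromCols 1 L)ᵀ * A).rank := rank_mul_le_left _ _
      _ ≤ A.rank := rank_mul_le_right _ _
end

section
/- A real symmetric (n+m)×(n+m) matrix E lies in the elliptope E_{n+m} if and only if there exist an integer d ≥ 1 and d×d Hermitian matrices A_1,...,A_n, B_1,...,B_m with A_i² = B_j² = (1/d) I_d for all i, j, such that E is the Gram matrix of (A_1,...,A_n, B_1,...,B_m) with respect to the Hilbert–Schmidt inner product. -/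
open Matrix

namespace ElliptopeAux
open Finset

variable {N : ℕ}

/-- Flip coordinate `i`. -/
def flip (i : Fin N) (s : Fin N → Bool) : Fin N → Bool := Function.update s i (!s i)

lemma flip_apply_self (i : Fin N) (s : Fin N → Bool) : flip i s i = !s i := by
  simp [flip]

lemma flip_apply_ne (i : Fin N) (s : Fin N → Bool) {j : Fin N} (h : j ≠ i) :
    flip i s j = s j := by simp [flip, Function.update_of_ne h]

lemma flip_flip (i : Fin N) (s : Fin N → Bool) : flip i (flip i s) = s := by
  funext j
  by_cases h : j = i
  · subst h; simp [flip_apply_self]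
  · rw [flip_apply_ne _ _ h, flip_apply_ne _ _ h]

lemma flip_comm (i j : Fin N) (h : i ≠ j) (s : Fin N → Bool) :
    flip i (flip j s) = flip j (flip i s) := by
  funext k
  by_cases hk : k = i
  · subst hk
    rw [flip_apply_self, flip_apply_ne _ _ h, flip_apply_ne _ _ h, flip_apply_self]
  · rw [flip_apply_ne _ _ hk]
    by_cases hk2 : k = j
    · subst hk2
      rw [flip_apply_self, flip_apply_self, flip_apply_ne _ _ (Ne.symm h)]
    · rw [flip_apply_ne _ _ hk2, flip_apply_ne _ _ hk2, flip_apply_ne _ _ hk]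

/-- The Jordan-Wigner sign. -/
def sgn (i : Fin N) (s : Fin N → Bool) : ℂ :=
  ∏ j ∈ Finset.univ.filter (· < i), (if s j then (-1 : ℂ) else 1)

lemma sgn_mul_self (i : Fin N) (s : Fin N → Bool) : sgn i s * sgn i s = 1 := by
  rw [sgn, ← Finset.prod_mul_distrib]
  refine Finset.prod_eq_one fun j _ => ?_
  by_cases h : s j <;> simp [h]

lemma sgn_conj (i : Fin N) (s : Fin N → Bool) :
    (starRingEnd ℂ) (sgn i s) = sgn i s := by
  rw [sgn, map_prod]
  refine Finset.prod_congr rfl fun j _ => ?_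
  by_cases h : s j <;> simp [h]

lemma sgn_congr {i : Fin N} {s t : Fin N → Bool} (h : ∀ j, j < i → s j = t j) :
    sgn i s = sgn i t := by
  refine Finset.prod_congr rfl fun j hj => ?_
  rw [h j (by simpa using hj)]

lemma sgn_flip_of_le {i j : Fin N} (h : i ≤ j) (s : Fin N → Bool) :
    sgn i (flip j s) = sgn i s := by
  refine sgn_congr fun k hk => ?_
  exact flip_apply_ne _ _ (fun hkj => absurd h (by subst hkj; exact not_le.2 hk))

lemma sgn_flip_of_lt {i j : Fin N} (h : i < j) (s : Fin N → Bool) :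
    sgn j (flip i s) = - sgn j s := by
  have hi : i ∈ Finset.univ.filter (· < j) := by simp [h]
  rw [sgn, sgn, ← Finset.mul_prod_erase _ _ hi, ← Finset.mul_prod_erase _ _ hi]
  have hrest : ∏ k ∈ (Finset.univ.filter (· < j)).erase i, (if flip i s k then (-1:ℂ) else 1)
      = ∏ k ∈ (Finset.univ.filter (· < j)).erase i, (if s k then (-1:ℂ) else 1) := by
    refine Finset.prod_congr rfl fun k hk => ?_
    rw [flip_apply_ne _ _ (Finset.ne_of_mem_erase hk)]
  rw [hrest, flip_apply_self]
  by_cases h : s i <;> simp [h]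

/-- Jordan–Wigner generator matrices. -/
def Gamma (i : Fin N) : Matrix (Fin N → Bool) (Fin N → Bool) ℂ :=
  Matrix.of fun s t => if t = flip i s then sgn i s else 0

lemma gamma_hermitian (i : Fin N) : (Gamma i).IsHermitian := by
  ext s t
  simp only [Matrix.conjTranspose_apply, Gamma, Matrix.of_apply]
  by_cases h : s = flip i t
  · have h' : t = flip i s := by rw [h, flip_flip]
    rw [if_pos h, if_pos h']
    rw [show star (sgn i t) = sgn i t from sgn_conj i t]
    refine sgn_congr fun j hj => ?_
    rw [h', flip_apply_ne _ _ (ne_of_lt hj)]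
  · have h' : t ≠ flip i s := fun ht => h (by rw [ht, flip_flip])
    rw [if_neg h, if_neg h', star_zero]

lemma gamma_mul_apply (i j : Fin N) (s t : Fin N → Bool) :
    (Gamma i * Gamma j) s t
      = if t = flip j (flip i s) then sgn i s * sgn j (flip i s) else 0 := by
  rw [Matrix.mul_apply]
  rw [Finset.sum_eq_single (flip i s)]
  · simp [Gamma, eq_comm]
  · intro u _ hu
    simp [Gamma, (fun h : u = flip i s => hu h), hu]
  · simp

lemma gamma_mul_self (i : Fin N) : Gamma i * Gamma i = 1 := by
  ext s t
  rw [gamma_mul_apply, flip_flip, sgn_flip_of_le le_rfl, sgn_mul_self, Matrix.one_apply]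
  simp [eq_comm]

lemma gamma_anticomm {i j : Fin N} (h : i ≠ j) :
    Gamma i * Gamma j + Gamma j * Gamma i = 0 := by
  have key : ∀ (i j : Fin N), i < j → ∀ s,
      sgn i s * sgn j (flip i s) = -(sgn j s * sgn i (flip j s)) := by
    intro i j hij s
    rw [sgn_flip_of_lt hij, sgn_flip_of_le (le_of_lt hij)]
    ring
  ext s t
  rw [Matrix.add_apply, gamma_mul_apply, gamma_mul_apply, flip_comm j i (Ne.symm h),
    Matrix.zero_apply]
  by_cases ht : t = flip i (flip j s)
  · rw [if_pos ht, if_pos ht]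
    rcases lt_or_gt_of_ne h with hij | hij
    · rw [key i j hij s]; ring
    · rw [key j i hij s]; ring
  · rw [if_neg ht, if_neg ht, add_zero]

lemma gamma_mul_trace (i j : Fin N) :
    (Gamma i * Gamma j).trace = if i = j then ((2 : ℂ) ^ N) else 0 := by
  by_cases h : i = j
  · subst h
    rw [gamma_mul_self, if_pos rfl, Matrix.trace_one]
    simp
  · rw [if_neg h, Matrix.trace]
    refine Finset.sum_eq_zero fun s _ => ?_
    rw [Matrix.diag_apply, gamma_mul_apply, if_neg]
    intro hs
    have := congrFun hs i
    rw [flip_apply_ne _ _ h, flip_apply_self] at this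
    exact (Bool.not_ne_self (s i)) this.symm

/-- Linear combination of the generators with real coefficients. -/
noncomputable def clifMat (v : Fin N → ℝ) : Matrix (Fin N → Bool) (Fin N → Bool) ℂ :=
  ∑ i, (v i : ℂ) • Gamma i

lemma clifMat_hermitian (v : Fin N → ℝ) : (clifMat v).IsHermitian := by
  show (clifMat v)ᴴ = clifMat v
  rw [clifMat, Matrix.conjTranspose_sum]
  refine Finset.sum_congr rfl fun i _ => ?_
  rw [Matrix.conjTranspose_smul, gamma_hermitian i]
  congr 1
  simp

lemma clifMat_mul (v w : Fin N → ℝ) :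
    clifMat v * clifMat w = ∑ i, ∑ j, ((v i : ℂ) * (w j : ℂ)) • (Gamma i * Gamma j) := by
  rw [clifMat, clifMat, Finset.sum_mul]
  refine Finset.sum_congr rfl fun i _ => ?_
  rw [Finset.mul_sum]
  refine Finset.sum_congr rfl fun j _ => ?_
  rw [smul_mul_assoc, mul_smul_comm, smul_smul]

lemma clifMat_mul_self (v : Fin N → ℝ) :
    clifMat v * clifMat v = ((∑ i, v i * v i : ℝ) : ℂ) • 1 := by
  have h2 : (2 : ℂ) • (clifMat v * clifMat v)
      = (2 : ℂ) • (((∑ i, v i * v i : ℝ) : ℂ) • (1 : Matrix (Fin N → Bool) (Fin N → Bool) ℂ)) := by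
    have swap : clifMat v * clifMat v
        = ∑ i, ∑ j, ((v i : ℂ) * (v j : ℂ)) • (Gamma j * Gamma i) := by
      rw [clifMat_mul, Finset.sum_comm]
      refine Finset.sum_congr rfl fun i _ => Finset.sum_congr rfl fun j _ => ?_
      rw [mul_comm ((v j : ℂ))]
    calc (2 : ℂ) • (clifMat v * clifMat v)
        = clifMat v * clifMat v + clifMat v * clifMat v := two_smul ℂ _
      _ = ∑ i, ∑ j, ((v i : ℂ) * (v j : ℂ)) • (Gamma i * Gamma j + Gamma j * Gamma i) := by
          nth_rewrite 2 [swap]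
          rw [clifMat_mul, ← Finset.sum_add_distrib]
          refine Finset.sum_congr rfl fun i _ => ?_
          rw [← Finset.sum_add_distrib]
          refine Finset.sum_congr rfl fun j _ => ?_
          rw [smul_add]
      _ = ∑ i, ((v i : ℂ) * (v i : ℂ)) • ((2 : ℂ) • (1 : Matrix (Fin N → Bool) (Fin N → Bool) ℂ)) := by
          refine Finset.sum_congr rfl fun i _ => ?_
          rw [Finset.sum_eq_single i]
          · rw [gamma_mul_self, two_smul]
          · intro j _ hj
            rw [gamma_anticomm (Ne.symm hj), smul_zero]
          · simp
      _ = (2 : ℂ) • (((∑ i, v i * v i : ℝ) : ℂ) • 1) := by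
          simp only [smul_smul, ← Finset.sum_smul]
          congr 1
          push_cast
          rw [Finset.mul_sum]
          refine Finset.sum_congr rfl fun i _ => ?_
          ring
  exact smul_right_injective _ (two_ne_zero) h2

lemma clifMat_mul_trace (v w : Fin N → ℝ) :
    (clifMat v * clifMat w).trace = ((∑ i, v i * w i : ℝ) : ℂ) * (2 : ℂ) ^ N := by
  rw [clifMat_mul, Matrix.trace_sum]
  push_cast
  rw [Finset.sum_mul]
  refine Finset.sum_congr rfl fun i _ => ?_
  rw [Matrix.trace_sum, Finset.sum_eq_single i]
  · rw [Matrix.trace_smul, gamma_mul_trace, if_pos rfl, smul_eq_mul]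
  · intro j _ hj
    rw [Matrix.trace_smul, gamma_mul_trace, if_neg (Ne.symm hj), smul_zero]
  · simp

end ElliptopeAux

/-- The elliptope on index type `ι`: real PSD matrices with unit diagonal. -/
def elliptope (ι : Type*) [Fintype ι] : Set (Matrix ι ι ℝ) :=
  {E | E.PosSemidef ∧ ∀ i, E i i = 1}

theorem mem_elliptope_iff_matrix_factorization (n m : ℕ)
    (E : Matrix (Fin n ⊕ Fin m) (Fin n ⊕ Fin m) ℝ) (hE : E.IsSymm) :
    E ∈ elliptope (Fin n ⊕ Fin m) ↔
      ∃ d : ℕ, 1 ≤ d ∧ ∃ M : Fin n ⊕ Fin m → Matrix (Fin d) (Fin d) ℂ,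
        (∀ k, (M k).IsHermitian) ∧
        (∀ k, M k * M k = ((d : ℂ))⁻¹ • 1) ∧
        (∀ k l, (E k l : ℂ) = (M k * M l).trace) := by
  classical
  constructor
  · rintro ⟨hpsd, hdiag⟩
    obtain ⟨B, hB⟩ : ∃ B : Matrix (Fin n ⊕ Fin m) (Fin n ⊕ Fin m) ℝ, E = Bᴴ * B := by
      open scoped MatrixOrder in exact CStarAlgebra.nonneg_iff_eq_star_mul_self.mp hpsd.nonneg
    set N := n + m with hN
    let e : (Fin n ⊕ Fin m) ≃ Fin N := finSumFinEquiv
    let v : (Fin n ⊕ Fin m) → Fin N → ℝ := fun k i => B (e.symm i) k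
    have hv : ∀ k l, (∑ i, v k i * v l i) = E k l := by
      intro k l
      have : (∑ i, v k i * v l i) = ∑ j, B j k * B j l :=
        Equiv.sum_comp e.symm (fun j => B j k * B j l)
      rw [this, hB, Matrix.mul_apply]
      refine Finset.sum_congr rfl fun j _ => ?_
      simp [Matrix.conjTranspose_apply]
    refine ⟨2 ^ N, Nat.one_le_two_pow, ?_⟩
    let q : (Fin N → Bool) ≃ Fin (2 ^ N) := Fintype.equivFinOfCardEq (by simp)
    let c : ℂ := Complex.ofReal ((Real.sqrt ((2 : ℝ) ^ N))⁻¹)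
    have hd0 : (0:ℝ) ≤ (2:ℝ) ^ N := by positivity
    have hc2 : c * c = ((2 : ℂ) ^ N)⁻¹ := by
      show Complex.ofReal _ * Complex.ofReal _ = _
      rw [← Complex.ofReal_mul, ← mul_inv, Real.mul_self_sqrt hd0]
      push_cast
      ring
    have hcast : (((2 : ℕ) ^ N : ℕ) : ℂ) = (2 : ℂ) ^ N := by push_cast; ring
    have hcstar : star c = c := by
      show star (Complex.ofReal _) = _
      rw [RCLike.star_def, Complex.conj_ofReal]
    have hherm : ∀ k, (c • ElliptopeAux.clifMat (v k)).IsHermitian := by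
      intro k
      show _ᴴ = _
      rw [Matrix.conjTranspose_smul, ElliptopeAux.clifMat_hermitian (v k), hcstar]
    refine ⟨fun k => (Matrix.reindex q q) (c • ElliptopeAux.clifMat (v k)), ?_, ?_, ?_⟩
    · intro k
      dsimp only
      rw [Matrix.reindex_apply]
      exact (Matrix.isHermitian_submatrix_equiv q.symm).mpr (hherm k)
    · intro k
      dsimp only
      rw [Matrix.reindex_apply, Matrix.submatrix_mul_equiv]
      have hsum : (∑ i, v k i * v k i : ℝ) = 1 := by rw [hv k k, hdiag k]
      have hinner : (c • ElliptopeAux.clifMat (v k)) * (c • ElliptopeAux.clifMat (v k))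
          = (((2:ℕ) ^ N : ℕ) : ℂ)⁻¹ • 1 := by
        rw [smul_mul_smul_comm, ElliptopeAux.clifMat_mul_self, hsum, smul_smul, hc2, hcast]
        norm_num
      rw [hinner]
      ext i j
      simp [Matrix.submatrix_apply, Matrix.smul_apply, Matrix.one_apply]
    · intro k l
      dsimp only
      simp only [Matrix.reindex_apply]
      rw [Matrix.submatrix_mul_equiv]
      have tr_sub : ∀ (A : Matrix (Fin N → Bool) (Fin N → Bool) ℂ),
          (A.submatrix q.symm q.symm).trace = A.trace := by
        intro A
        rw [Matrix.trace, Matrix.trace]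
        exact Fintype.sum_equiv q.symm _ _ fun i => rfl
      rw [tr_sub, smul_mul_smul_comm, Matrix.trace_smul, smul_eq_mul,
        ElliptopeAux.clifMat_mul_trace, hv k l, hc2]
      have h2 : ((2:ℂ) ^ N) ≠ 0 := pow_ne_zero _ two_ne_zero
      field_simp
  · rintro ⟨d, hd, M, hherm, hsq, htr⟩
    have hdc : (d : ℂ) ≠ 0 := Nat.cast_ne_zero.mpr (by omega)
    have hEH : E.IsHermitian := by
      rw [Matrix.IsHermitian, Matrix.conjTranspose_eq_transpose_of_trivial]
      exact hE
    refine ⟨⟨hEH, fun x => ?_⟩, fun k => ?_⟩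
    · -- PSD inequality
      set H : Matrix (Fin d) (Fin d) ℂ := ∑ k, (x k : ℂ) • M k with hH
      have hHherm : H.IsHermitian := by
        show Hᴴ = H
        rw [hH, Matrix.conjTranspose_sum]
        refine Finset.sum_congr rfl fun k _ => ?_
        rw [Matrix.conjTranspose_smul, hherm k]
        congr 1
        rw [RCLike.star_def, Complex.conj_ofReal]
      have key1 : (H * H).trace = ∑ k, ∑ l, ((x k : ℂ) * (x l : ℂ)) * (M k * M l).trace := by
        rw [hH, Finset.sum_mul]
        rw [Matrix.trace_sum]
        refine Finset.sum_congr rfl fun k _ => ?_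
        rw [Finset.mul_sum, Matrix.trace_sum]
        refine Finset.sum_congr rfl fun l _ => ?_
        rw [smul_mul_assoc, mul_smul_comm, smul_smul, Matrix.trace_smul, smul_eq_mul]
      have key2 : (H * H).trace = ∑ i, ∑ j, ((Complex.normSq (H i j) : ℝ) : ℂ) := by
        rw [Matrix.trace]
        refine Finset.sum_congr rfl fun i _ => ?_
        rw [Matrix.diag_apply, Matrix.mul_apply]
        refine Finset.sum_congr rfl fun j _ => ?_
        rw [← hHherm.apply j i, RCLike.star_def, Complex.mul_conj]
      have expand : ((x ⬝ᵥ E *ᵥ x : ℝ) : ℂ) = (H * H).trace := by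
        rw [key1, dotProduct]
        push_cast
        refine Finset.sum_congr rfl fun k _ => ?_
        rw [Matrix.mulVec, dotProduct]
        push_cast
        rw [Finset.mul_sum]
        refine Finset.sum_congr rfl fun l _ => ?_
        rw [← htr k l]
        ring
      have hval : x ⬝ᵥ E *ᵥ x = ∑ i, ∑ j, Complex.normSq (H i j) := by
        apply Complex.ofReal_injective
        rw [expand, key2]
        push_cast
        rfl
      have hpos : 0 ≤ x ⬝ᵥ E *ᵥ x := by
        rw [hval]
        refine Finset.sum_nonneg fun i _ => Finset.sum_nonneg fun j _ => Complex.normSq_nonneg _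
      simpa [Finsupp.sum_fintype, dotProduct, mulVec, Finset.mul_sum, mul_add, mul_assoc] using hpos
    · -- unit diagonal
      have h1 : (E k k : ℂ) = 1 := by
        rw [htr k k, hsq k, Matrix.trace_smul, Matrix.trace_one, smul_eq_mul]
        simp [inv_mul_cancel₀ hdc]
      exact_mod_cast h1
end

section
/- Let E = [[A, C],[Cᵀ, B]] ∈ E_{n+m} be an extreme point of the elliptope with rank(A) = rank(E) = n, and let Λ = (λ_{ij}) be an n×m real matrix with C = AΛ and B = Λᵀ A Λ. Suppose X_1,...,X_n are d×d Hermitian matrices satisfying X_i² = I_d for all i ∈ [n] and (∑_{i=1}^n λ_{ij} X_i)² = I_d for all j ∈ [m]. Then (∑_{i=1}^n μ_i X_i)² = (μᵀ A μ) I_d for all μ ∈ R^n; in particular X_i X_j + X_j X_i = 2 A_{ij} I_d for all i, j ∈ [n]. -/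
open Matrix

/-! ### Auxiliary lemmas -/

lemma aux_psd_upper {k : ℕ} {H : Matrix (Fin k) (Fin k) ℝ} (hH : H.IsHermitian)
    {c : ℝ} (hc : ∀ i, hH.eigenvalues i ≤ c) :
    (c • (1 : Matrix (Fin k) (Fin k) ℝ) - H).PosSemidef := by
  set U : Matrix (Fin k) (Fin k) ℝ := (hH.eigenvectorUnitary : Matrix (Fin k) (Fin k) ℝ) with hUdef
  have hU : U * star U = 1 := (Matrix.mem_unitaryGroup_iff).mp hH.eigenvectorUnitary.2
  have key : c • (1 : Matrix (Fin k) (Fin k) ℝ) - H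
      = U * diagonal (fun i => c - hH.eigenvalues i) * star U := by
    have hs := hH.spectral_theorem
    simp only [Unitary.conjStarAlgAut_apply, Unitary.coe_star, ← hUdef] at hs
    have h1 : diagonal (fun i => c - hH.eigenvalues i)
        = c • (1 : Matrix (Fin k) (Fin k) ℝ) - diagonal (RCLike.ofReal ∘ hH.eigenvalues) := by
      ext i j
      by_cases h : i = j <;> simp [h, diagonal, Matrix.one_apply, Matrix.smul_apply]
    rw [h1, Matrix.mul_sub, Matrix.sub_mul, ← hs]
    congr 1
    rw [Matrix.mul_smul, mul_one, Matrix.smul_mul, hU]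
  rw [key]
  exact (Matrix.PosSemidef.diagonal
    (fun i => by simpa using sub_nonneg.mpr (hc i))).mul_mul_conjTranspose_same U

lemma aux_psd_lower {k : ℕ} {H : Matrix (Fin k) (Fin k) ℝ} (hH : H.IsHermitian)
    {c : ℝ} (hc : ∀ i, c ≤ hH.eigenvalues i) :
    (H - c • (1 : Matrix (Fin k) (Fin k) ℝ)).PosSemidef := by
  set U : Matrix (Fin k) (Fin k) ℝ := (hH.eigenvectorUnitary : Matrix (Fin k) (Fin k) ℝ) with hUdef
  have hU : U * star U = 1 := (Matrix.mem_unitaryGroup_iff).mp hH.eigenvectorUnitary.2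
  have key : H - c • (1 : Matrix (Fin k) (Fin k) ℝ)
      = U * diagonal (fun i => hH.eigenvalues i - c) * star U := by
    have hs := hH.spectral_theorem
    simp only [Unitary.conjStarAlgAut_apply, Unitary.coe_star, ← hUdef] at hs
    have h1 : diagonal (fun i => hH.eigenvalues i - c)
        = diagonal (RCLike.ofReal ∘ hH.eigenvalues) - c • (1 : Matrix (Fin k) (Fin k) ℝ) := by
      ext i j
      by_cases h : i = j <;> simp [h, diagonal, Matrix.one_apply, Matrix.smul_apply]
    rw [h1, Matrix.mul_sub, Matrix.sub_mul, ← hs]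
    congr 1
    rw [Matrix.mul_smul, mul_one, Matrix.smul_mul, hU]
  rw [key]
  exact (Matrix.PosSemidef.diagonal
    (fun i => by simpa using sub_nonneg.mpr (hc i))).mul_mul_conjTranspose_same U

lemma aux_psd_smul {k : ℕ} {M : Matrix (Fin k) (Fin k) ℝ} (hM : M.PosSemidef) {t : ℝ}
    (ht : 0 ≤ t) : (t • M).PosSemidef := by
  refine .of_dotProduct_mulVec_nonneg ?_ fun x => ?_
  · unfold Matrix.IsHermitian
    rw [conjTranspose_smul, hM.1.eq]
    simp
  · have := hM.dotProduct_mulVec_nonneg x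
    rw [smul_mulVec, dotProduct_smul]
    exact mul_nonneg ht this

lemma aux_exists_perturb {k : ℕ} {A S : Matrix (Fin k) (Fin k) ℝ} (hA : A.PosDef)
    (hS : S.IsHermitian) :
    ∃ t : ℝ, 0 < t ∧ (A + t • S).PosSemidef ∧ (A - t • S).PosSemidef := by
  set c : ℝ := 1 + ∑ i, |hS.eigenvalues i| with hc
  have hcpos : 0 < c := by
    have : (0:ℝ) ≤ ∑ i, |hS.eigenvalues i| := Finset.sum_nonneg fun i _ => abs_nonneg _
    linarith
  have hbound : ∀ i, |hS.eigenvalues i| ≤ c := by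
    intro i
    have h1 : |hS.eigenvalues i| ≤ ∑ j, |hS.eigenvalues j| :=
      Finset.single_le_sum (f := fun j => |hS.eigenvalues j|)
        (fun j _ => abs_nonneg _) (Finset.mem_univ i)
    linarith
  have hup : (c • (1 : Matrix (Fin k) (Fin k) ℝ) - S).PosSemidef :=
    aux_psd_upper hS fun i => (le_abs_self _).trans (hbound i)
  have hlo : (S - (-c) • (1 : Matrix (Fin k) (Fin k) ℝ)).PosSemidef :=
    aux_psd_lower hS fun i => by
      have := hbound i; have := neg_abs_le (hS.eigenvalues i); linarith
  by_cases hk : k = 0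
  · subst hk
    refine ⟨1, one_pos, ⟨?_, ?_⟩, ?_, ?_⟩ <;>
      first
      | · unfold Matrix.IsHermitian; ext i j; exact absurd i.2 (by omega)
      | · intro x; simp [dotProduct, Finset.sum_of_isEmpty, Finsupp.sum, Finset.eq_empty_of_isEmpty]
  · have : Nonempty (Fin k) := ⟨⟨0, Nat.pos_of_ne_zero hk⟩⟩
    set hAh := hA.isHermitian
    set a : ℝ := Finset.univ.inf' Finset.univ_nonempty hAh.eigenvalues with ha
    have hapos : 0 < a := by
      rw [ha, Finset.lt_inf'_iff]
      exact fun i _ => hA.eigenvalues_pos i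
    have hAlow : (A - a • (1 : Matrix (Fin k) (Fin k) ℝ)).PosSemidef :=
      aux_psd_lower hAh fun i => Finset.inf'_le _ (Finset.mem_univ i)
    refine ⟨a / c, div_pos hapos hcpos, ?_, ?_⟩
    · have h1 : A + (a / c) • S
          = (A - a • (1 : Matrix (Fin k) (Fin k) ℝ)) + (a / c) • (S - (-c) • 1) := by
        rw [smul_sub, smul_smul]
        have h2 : a / c * (-c) = -a := by field_simp
        rw [h2]
        module
      rw [h1]
      exact hAlow.add (aux_psd_smul hlo (div_pos hapos hcpos).le)
    · have h1 : A - (a / c) • S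
          = (A - a • (1 : Matrix (Fin k) (Fin k) ℝ)) + (a / c) • (c • 1 - S) := by
        rw [smul_sub, smul_smul]
        have h2 : a / c * c = a := by field_simp
        rw [h2]
        module
      rw [h1]
      exact hAlow.add (aux_psd_smul hup (div_pos hapos hcpos).le)

lemma aux_block_psd {n m : ℕ} (L : Matrix (Fin n) (Fin m) ℝ) {T : Matrix (Fin n) (Fin n) ℝ}
    (hT : T.PosSemidef) :
    (Matrix.fromBlocks T (T * L) (Lᵀ * T) (Lᵀ * T * L)).PosSemidef := by
  have h := hT.mul_mul_conjTranspose_same (fromRows (1 : Matrix (Fin n) (Fin n) ℝ) Lᵀ)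
  have he : fromRows (1 : Matrix (Fin n) (Fin n) ℝ) Lᵀ * T *
        (fromRows (1 : Matrix (Fin n) (Fin n) ℝ) Lᵀ)ᴴ
      = Matrix.fromBlocks T (T * L) (Lᵀ * T) (Lᵀ * T * L) := by
    rw [conjTranspose_fromRows_eq_fromCols_conjTranspose, fromRows_mul, fromRows_mul,
      mul_fromCols, mul_fromCols, fromRows_fromCols_eq_fromBlocks]
    simp [conjTranspose_eq_transpose_of_trivial]
  rwa [he] at h

lemma aux_quad_entry {n m : ℕ} (L : Matrix (Fin n) (Fin m) ℝ) (M : Matrix (Fin n) (Fin n) ℝ)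
    (j : Fin m) : (Lᵀ * M * L) j j = ∑ i, ∑ k, L i j * M i k * L k j := by
  have e1 : ∀ k, (Lᵀ * M) j k = ∑ i, L i j * M i k := fun k => by
    rw [Matrix.mul_apply]; simp [Matrix.transpose_apply]
  rw [Matrix.mul_apply]
  simp_rw [e1, Finset.sum_mul]
  rw [Finset.sum_comm]

lemma aux_extreme_key {n m : ℕ} {A : Matrix (Fin n) (Fin n) ℝ} {B : Matrix (Fin m) (Fin m) ℝ}
    {C : Matrix (Fin n) (Fin m) ℝ}
    (hExt : Matrix.fromBlocks A C Cᵀ B ∈ Set.extremePoints ℝ (elliptope (Fin n ⊕ Fin m)))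
    (hrankA : A.rank = n)
    {L : Matrix (Fin n) (Fin m) ℝ} (hL₁ : C = A * L) (hL₂ : B = Lᵀ * A * L)
    {S : Matrix (Fin n) (Fin n) ℝ} (hS : S.IsHermitian)
    (hdiagS : ∀ i, S i i = 0) (hLS : ∀ j, (Lᵀ * S * L) j j = 0) : S = 0 := by
  obtain ⟨⟨hpsd, hdiag⟩, hext⟩ := hExt
  have hA_psd : A.PosSemidef := by
    have h := hpsd.submatrix (Sum.inl : Fin n → Fin n ⊕ Fin m)
    have he : (Matrix.fromBlocks A C Cᵀ B).submatrix (Sum.inl : Fin n → Fin n ⊕ Fin m) Sum.inl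
        = A := by
      ext i j; simp [Matrix.fromBlocks]
    rwa [he] at h
  have hinj : Function.Injective A.mulVecLin := by
    have h1 : Module.finrank ℝ (LinearMap.range A.mulVecLin) = n := hrankA
    have h2 : LinearMap.range A.mulVecLin = ⊤ :=
      Submodule.eq_top_of_finrank_eq (by rw [h1, Module.finrank_fin_fun])
    exact (LinearMap.injective_iff_surjective).mpr (LinearMap.range_eq_top.mp h2)
  have hApd : A.PosDef := by
    refine .of_dotProduct_mulVec_pos hA_psd.isHermitian fun x hx => lt_of_le_of_ne (hA_psd.dotProduct_mulVec_nonneg x) fun h0 => hx ?_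
    have h1 : A *ᵥ x = 0 := (hA_psd.dotProduct_mulVec_zero_iff x).mp h0.symm
    exact hinj (by simpa using h1)
  obtain ⟨t, ht, hplus, hminus⟩ := aux_exists_perturb hApd hS
  set E' : Matrix (Fin n ⊕ Fin m) (Fin n ⊕ Fin m) ℝ := Matrix.fromBlocks A C Cᵀ B with hE'
  have hAt : Aᵀ = A := by
    rw [← conjTranspose_eq_transpose_of_trivial]; exact hA_psd.isHermitian.eq
  have hCt : Cᵀ = Lᵀ * A := by rw [hL₁, transpose_mul, hAt]
  set D : Matrix (Fin n ⊕ Fin m) (Fin n ⊕ Fin m) ℝ :=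
    Matrix.fromBlocks S (S * L) (Lᵀ * S) (Lᵀ * S * L) with hD
  have hblock : ∀ ε : ℝ, E' + ε • D
      = Matrix.fromBlocks (A + ε • S) ((A + ε • S) * L) (Lᵀ * (A + ε • S))
          (Lᵀ * (A + ε • S) * L) := by
    intro ε
    rw [hE', hD, hCt, hL₁, hL₂]
    ext x y
    cases x <;> cases y <;>
      simp [Matrix.fromBlocks, Matrix.add_apply, Matrix.smul_apply, Matrix.add_mul,
        Matrix.mul_add, Matrix.mul_smul, Matrix.smul_mul, Matrix.mul_assoc]
  have hmem : ∀ ε : ℝ, (A + ε • S).PosSemidef → E' + ε • D ∈ elliptope (Fin n ⊕ Fin m) := by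
    intro ε hps
    constructor
    · rw [hblock ε]; exact aux_block_psd L hps
    · intro i
      have hDdiag : D i i = 0 := by
        cases i with
        | inl i => simpa [hD, Matrix.fromBlocks] using hdiagS i
        | inr j => simpa [hD, Matrix.fromBlocks] using hLS j
      simp [Matrix.add_apply, Matrix.smul_apply, hDdiag, hdiag i]
  have hm1 : E' + t • D ∈ elliptope (Fin n ⊕ Fin m) := hmem t hplus
  have hm2 : E' + (-t) • D ∈ elliptope (Fin n ⊕ Fin m) := by
    refine hmem (-t) ?_
    have : A + (-t) • S = A - t • S := by module
    rwa [this]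
  have hseg : E' ∈ openSegment ℝ (E' + t • D) (E' + (-t) • D) := by
    refine ⟨1/2, 1/2, by norm_num, by norm_num, by norm_num, ?_⟩
    module
  have h1 := hext hm1 hm2 hseg
  have hD0 : D = 0 := by
    have h2 : t • D = 0 := by
      have h3 := h1
      rwa [add_eq_left] at h3
    exact (smul_eq_zero.mp h2).resolve_left ht.ne'
  ext i j
  have := congrFun (congrFun hD0 (Sum.inl i)) (Sum.inl j)
  simpa [hD, Matrix.fromBlocks] using this

theorem clifford_relations_of_extreme (n m d : ℕ)
    (A : Matrix (Fin n) (Fin n) ℝ) (B : Matrix (Fin m) (Fin m) ℝ)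
    (C : Matrix (Fin n) (Fin m) ℝ)
    (hExt : Matrix.fromBlocks A C Cᵀ B ∈
      Set.extremePoints ℝ (elliptope (Fin n ⊕ Fin m)))
    (hrankA : A.rank = n) (hrankE : (Matrix.fromBlocks A C Cᵀ B).rank = n)
    (L : Matrix (Fin n) (Fin m) ℝ) (hL₁ : C = A * L) (hL₂ : B = Lᵀ * A * L)
    (X : Fin n → Matrix (Fin d) (Fin d) ℂ)
    (hherm : ∀ i, (X i).IsHermitian)
    (hsq : ∀ i, X i * X i = 1)
    (hcol : ∀ j, (∑ i, (L i j : ℂ) • X i) * (∑ i, (L i j : ℂ) • X i) = 1) :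
    (∀ μ : Fin n → ℝ,
        (∑ i, (μ i : ℂ) • X i) * (∑ i, (μ i : ℂ) • X i)
          = ((μ ⬝ᵥ A.mulVec μ : ℝ) : ℂ) • 1) ∧
    (∀ i j, X i * X j + X j * X i = ((2 * A i j : ℝ) : ℂ) • 1) := by
  obtain ⟨hpsd, hdiag⟩ := hExt.1
  have hAii : ∀ i, A i i = 1 := fun i => by simpa [Matrix.fromBlocks] using hdiag (Sum.inl i)
  have hBjj : ∀ j, B j j = 1 := fun j => by simpa [Matrix.fromBlocks] using hdiag (Sum.inr j)
  have hAsymm : ∀ i k, A k i = A i k := by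
    intro i k
    have := congrFun (congrFun hpsd.1.eq (Sum.inl i)) (Sum.inl k)
    simpa [Matrix.fromBlocks, Matrix.conjTranspose_apply] using this
  -- the defect matrices
  set Gm : Fin n → Fin n → Matrix (Fin d) (Fin d) ℂ :=
    fun i k => X i * X k + X k * X i - ((2 * A i k : ℝ) : ℂ) • 1 with hGm
  have hGm_symm : ∀ i k, Gm k i = Gm i k := by
    intro i k
    simp only [hGm]
    rw [hAsymm i k, add_comm]
  have hGm_diag : ∀ i, Gm i i = 0 := by
    intro i
    simp only [hGm, hsq i, hAii i, mul_one]
    have h1 : ((2 : ℝ) : ℂ) • (1 : Matrix (Fin d) (Fin d) ℂ) = 1 + 1 := by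
      norm_num [two_smul]
    rw [h1]
    abel
  -- the crucial sum identity
  have hGm_sum : ∀ j, ∑ i, ∑ k, ((L i j * L k j : ℝ) : ℂ) • Gm i k = 0 := by
    intro j
    have T1 : ∑ i, ∑ k, ((L i j * L k j : ℝ) : ℂ) • (X i * X k) = 1 := by
      have h := hcol j
      rw [Finset.sum_mul_sum] at h
      simp_rw [smul_mul_smul_comm] at h
      push_cast
      exact h
    have T2 : ∑ i, ∑ k, ((L i j * L k j : ℝ) : ℂ) • (X k * X i) = 1 := by
      rw [Finset.sum_comm]
      calc ∑ k, ∑ i, ((L i j * L k j : ℝ) : ℂ) • (X k * X i)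
          = ∑ k, ∑ i, ((L k j * L i j : ℝ) : ℂ) • (X k * X i) :=
            Finset.sum_congr rfl fun k _ => Finset.sum_congr rfl fun i _ => by
              rw [mul_comm (L i j)]
        _ = 1 := T1
    have hABreal : ∑ i, ∑ k, (L i j * (2 * A i k) * L k j) = 2 := by
      have h1 : (Lᵀ * A * L) j j = ∑ i, ∑ k, L i j * A i k * L k j := aux_quad_entry L A j
      have h2 : B j j = 1 := hBjj j
      rw [hL₂, h1] at h2
      calc ∑ i, ∑ k, (L i j * (2 * A i k) * L k j)
          = 2 * ∑ i, ∑ k, L i j * A i k * L k j := by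
            rw [Finset.mul_sum]
            refine Finset.sum_congr rfl fun i _ => ?_
            rw [Finset.mul_sum]
            exact Finset.sum_congr rfl fun k _ => by ring
        _ = 2 := by rw [h2]; ring
    have T3 : ∑ i, ∑ k, ((L i j * L k j : ℝ) : ℂ) • (((2 * A i k : ℝ) : ℂ) • (1 : Matrix (Fin d) (Fin d) ℂ))
        = (2 : ℂ) • (1 : Matrix (Fin d) (Fin d) ℂ) := by
      have : ∀ i k, ((L i j * L k j : ℝ) : ℂ) • (((2 * A i k : ℝ) : ℂ) • (1 : Matrix (Fin d) (Fin d) ℂ))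
          = ((L i j * (2 * A i k) * L k j : ℝ) : ℂ) • (1 : Matrix (Fin d) (Fin d) ℂ) := by
        intro i k
        rw [smul_smul]
        congr 1
        push_cast
        ring
      simp_rw [this, ← Finset.sum_smul, ← Complex.ofReal_sum, hABreal]
      norm_num
    calc ∑ i, ∑ k, ((L i j * L k j : ℝ) : ℂ) • Gm i k
        = ∑ i, ∑ k, (((L i j * L k j : ℝ) : ℂ) • (X i * X k)
            + ((L i j * L k j : ℝ) : ℂ) • (X k * X i)
            - ((L i j * L k j : ℝ) : ℂ) • (((2 * A i k : ℝ) : ℂ) • (1 : Matrix (Fin d) (Fin d) ℂ))) := by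
          simp_rw [hGm, smul_sub, smul_add]
      _ = (∑ i, ∑ k, ((L i j * L k j : ℝ) : ℂ) • (X i * X k))
            + (∑ i, ∑ k, ((L i j * L k j : ℝ) : ℂ) • (X k * X i))
            - ∑ i, ∑ k, ((L i j * L k j : ℝ) : ℂ) • (((2 * A i k : ℝ) : ℂ) • (1 : Matrix (Fin d) (Fin d) ℂ)) := by
          simp [Finset.sum_add_distrib, Finset.sum_sub_distrib]
      _ = 0 := by rw [T1, T2, T3, two_smul]; abel
  -- entrywise annihilation via extremality
  have main : ∀ i k, Gm i k = 0 := by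
    have key : ∀ (f : ℂ →ₗ[ℝ] ℝ) (a b : Fin d) (i k : Fin n), f (Gm i k a b) = 0 := by
      intro f a b i k
      set M : Matrix (Fin n) (Fin n) ℝ := Matrix.of fun i k => f (Gm i k a b) with hM
      have hMherm : M.IsHermitian := by
        unfold Matrix.IsHermitian
        ext i' k'
        simp only [hM, Matrix.conjTranspose_apply, Matrix.of_apply, star_trivial]
        rw [hGm_symm]
      have hMdiag : ∀ i', M i' i' = 0 := by
        intro i'
        simp only [hM, Matrix.of_apply, hGm_diag i']
        simp
      have hMquad : ∀ j, (Lᵀ * M * L) j j = 0 := by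
        intro j
        rw [aux_quad_entry]
        have h0 := hGm_sum j
        have h1 : ∑ i', ∑ k', ((L i' j * L k' j : ℝ) : ℂ) • Gm i' k' a b = (0 : ℂ) := by
          have h0' := congrFun (congrFun h0 a) b
          simpa [Matrix.sum_apply, Matrix.smul_apply] using h0'
        have h2 : ∑ i', ∑ k', (L i' j * L k' j) * f (Gm i' k' a b) = 0 := by
          have h3 := congrArg f h1
          simp only [map_sum, map_zero] at h3
          rw [← h3]
          refine Finset.sum_congr rfl fun i' _ => Finset.sum_congr rfl fun k' _ => ?_
          have h4 : ((L i' j * L k' j : ℝ) : ℂ) • Gm i' k' a b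
              = (L i' j * L k' j : ℝ) • (Gm i' k' a b) := by
            rw [Complex.coe_smul]
          rw [h4, LinearMap.map_smul, smul_eq_mul]
        rw [← h2]
        refine Finset.sum_congr rfl fun i' _ => Finset.sum_congr rfl fun k' _ => ?_
        simp only [hM, Matrix.of_apply]
        ring
      have hM0 : M = 0 := aux_extreme_key hExt hrankA hL₁ hL₂ hMherm hMdiag hMquad
      have := congrFun (congrFun hM0 i) k
      simpa [hM] using this
    intro i k
    refine Matrix.ext fun a b => ?_
    have hre := key Complex.reLm a b i k
    have him := key Complex.imLm a b i k
    simp only [Complex.reLm_coe, Complex.imLm_coe] at hre him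
    rw [Matrix.zero_apply]
    exact Complex.ext (by simpa using hre) (by simpa using him)
  have concl₂ : ∀ i k, X i * X k + X k * X i = ((2 * A i k : ℝ) : ℂ) • 1 := by
    intro i k
    have := main i k
    rw [hGm] at this
    linear_combination (norm := module) this
  refine ⟨?_, concl₂⟩
  intro μ
  set SS := (∑ i, (μ i : ℂ) • X i) * (∑ i, (μ i : ℂ) • X i) with hSS
  set RR := (((μ ⬝ᵥ A.mulVec μ : ℝ) : ℂ)) • (1 : Matrix (Fin d) (Fin d) ℂ) with hRR
  have hexp : SS = ∑ i, ∑ k, (((μ i : ℂ)) * (μ k : ℂ)) • (X i * X k) := by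
    rw [hSS, Finset.sum_mul_sum]
    simp_rw [smul_mul_smul_comm]
  have hswap : SS = ∑ i, ∑ k, (((μ i : ℂ)) * (μ k : ℂ)) • (X k * X i) := by
    rw [hexp, Finset.sum_comm]
    exact Finset.sum_congr rfl fun k _ => Finset.sum_congr rfl fun i _ => by
      rw [mul_comm ((μ i : ℂ))]
  have hdouble : SS + SS = RR + RR := by
    calc SS + SS = ∑ i, ∑ k, (((μ i : ℂ)) * (μ k : ℂ)) • (X i * X k + X k * X i) := by
          nth_rewrite 1 [hexp]
          nth_rewrite 1 [hswap]
          rw [← Finset.sum_add_distrib]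
          refine Finset.sum_congr rfl fun i _ => ?_
          rw [← Finset.sum_add_distrib]
          refine Finset.sum_congr rfl fun k _ => ?_
          rw [smul_add]
      _ = ∑ i, ∑ k, ((μ i * (2 * A i k) * μ k : ℝ) : ℂ) • (1 : Matrix (Fin d) (Fin d) ℂ) := by
          refine Finset.sum_congr rfl fun i _ => Finset.sum_congr rfl fun k _ => ?_
          rw [concl₂ i k, smul_smul]
          congr 1
          push_cast
          ring
      _ = ((∑ i, ∑ k, (μ i * (2 * A i k) * μ k) : ℝ) : ℂ) • (1 : Matrix (Fin d) (Fin d) ℂ) := by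
          simp_rw [← Finset.sum_smul, ← Complex.ofReal_sum]
      _ = RR + RR := by
          rw [hRR, ← two_smul ℂ, smul_smul]
          congr 1
          have hμ : μ ⬝ᵥ A.mulVec μ = ∑ i, ∑ k, μ i * A i k * μ k := by
            simp [dotProduct, Matrix.mulVec, Finset.mul_sum, mul_assoc]
          rw [hμ]
          push_cast
          rw [Finset.mul_sum]
          refine Finset.sum_congr rfl fun i _ => ?_
          rw [Finset.mul_sum]
          exact Finset.sum_congr rfl fun k _ => by ring
  have h2 : (2 : ℂ) • SS = (2 : ℂ) • RR := by
    rw [two_smul, two_smul]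
    exact hdouble
  exact smul_right_injective _ (two_ne_zero) h2
end
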